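/- Let A be an M×N real matrix with Spark(A) = L+1. Then for every p ∈ [0,1], the null space constant is strictly increasing in the sparsity level: for all k with 2 ≤ k ≤ L, γ(ℓ_p, A, k-1) < γ(ℓ_p, A, k). -/

import Mathlib

open Finset MeasureTheory Filter

/-- `phi p x = |x|^p`, with the convention `|x|^0 = 1` for `x ≠ 0` and `phi p 0 = 0`. -/
noncomputable def phi (p x : ℝ) : ℝ := if x = 0 then 0 else |x| ^ p

open Classical in
/-- support of a vector, as a finset -/
noncomputable def supp {n : ℕ} (z : Fin n → ℝ) : Finset (Fin n) :=
  Finset.univ.filter (fun i => z i ≠ 0)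

/-- `Spark(A) = s`: some `s` columns are linearly dependent (a kernel vector with support of
size `s`), and every nonzero kernel vector has support of size at least `s`. -/
def sparkEq {m n : ℕ} (A : Matrix (Fin m) (Fin n) ℝ) (s : ℕ) : Prop :=
  (∃ z, A.mulVec z = 0 ∧ z ≠ 0 ∧ (supp z).card = s) ∧
  (∀ z, A.mulVec z = 0 → z ≠ 0 → s ≤ (supp z).card)

/-- The set of constants `γ` satisfying the null space property inequality at level `k`. -/
def validNSC {m n : ℕ} (A : Matrix (Fin m) (Fin n) ℝ) (p : ℝ) (k : ℕ) : Set ℝ :=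
  {γ | ∀ S : Finset (Fin n), S.card ≤ k → ∀ z, A.mulVec z = 0 →
    ∑ i ∈ S, phi p (z i) ≤ γ * ∑ i ∈ Sᶜ, phi p (z i)}

/-- The null space constant `γ(ℓ_p, A, k)`: the smallest valid constant. -/
noncomputable def gammaNSC {m n : ℕ} (A : Matrix (Fin m) (Fin n) ℝ) (p : ℝ) (k : ℕ) : ℝ :=
  sInf (validNSC A p k)

/-- The ratio `θ(p, z, S)`. -/
noncomputable def theta {n : ℕ} (p : ℝ) (z : Fin n → ℝ) (S : Finset (Fin n)) : ℝ :=
  (∑ i ∈ S, phi p (z i)) / (∑ i ∈ Sᶜ, phi p (z i))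

lemma phi_nonneg (p x : ℝ) : 0 ≤ phi p x := by
  unfold phi; split
  · exact le_refl 0
  · exact Real.rpow_nonneg (abs_nonneg x) p

lemma phi_pos (p : ℝ) {x : ℝ} (hx : x ≠ 0) : 0 < phi p x := by
  unfold phi; rw [if_neg hx]; exact Real.rpow_pos_of_pos (abs_pos.2 hx) p

lemma phi_smul (p t x : ℝ) (ht : 0 < t) : phi p (t * x) = t ^ p * phi p x := by
  unfold phi
  by_cases hx : x = 0
  · simp [hx]
  · rw [if_neg hx, if_neg (mul_ne_zero (ne_of_gt ht) hx), abs_mul, abs_of_pos ht,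
      Real.mul_rpow (le_of_lt ht) (abs_nonneg x)]

lemma phi_eq {p : ℝ} (hp : p ≠ 0) (x : ℝ) : phi p x = |x| ^ p := by
  unfold phi
  by_cases hx : x = 0
  · simp [hx, Real.zero_rpow hp]
  · rw [if_neg hx]

lemma mem_supp {n : ℕ} (z : Fin n → ℝ) (i : Fin n) : i ∈ supp z ↔ z i ≠ 0 := by
  classical simp [supp]

/-- Existence of an index outside `S` where a nonzero kernel vector is nonzero. -/
lemma exists_outside {M N L : ℕ} {A : Matrix (Fin M) (Fin N) ℝ} (hspark : sparkEq A (L + 1))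
    {k : ℕ} (hk : k ≤ L) {S : Finset (Fin N)} (hS : S.card ≤ k) {z : Fin N → ℝ}
    (hz : A.mulVec z = 0) (hzne : z ≠ 0) : ∃ j, j ∈ Sᶜ ∧ z j ≠ 0 := by
  have hcard := hspark.2 z hz hzne
  have hnot : ¬ supp z ⊆ S := by
    intro hsub
    have := Finset.card_le_card hsub
    omega
  obtain ⟨j, hjs, hjns⟩ := Finset.not_subset.mp hnot
  exact ⟨j, Finset.mem_compl.mpr hjns, (mem_supp z j).mp hjs⟩

/-- The valid set is nonempty for `k ≤ L` when `Spark(A) = L+1`. -/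
lemma valid_nonempty {M N L : ℕ} (A : Matrix (Fin M) (Fin N) ℝ) (hspark : sparkEq A (L + 1))
    (p : ℝ) (hp : p ∈ Set.Icc (0 : ℝ) 1) (k : ℕ) (hk : k ≤ L) :
    (validNSC A p k).Nonempty := by
  have key : ∀ S : Finset (Fin N), ∃ γ : ℝ, 0 ≤ γ ∧ ∀ z, A.mulVec z = 0 → S.card ≤ k →
      ∑ i ∈ S, phi p (z i) ≤ γ * ∑ i ∈ Sᶜ, phi p (z i) := by
    intro S
    by_cases hp0 : p = 0
    · -- counting argument
      refine ⟨N, Nat.cast_nonneg N, ?_⟩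
      intro z hz hS
      by_cases hzne : z = 0
      · simp [hzne, phi]
      · obtain ⟨j, hjc, hjne⟩ := exists_outside hspark hk hS hz hzne
        have h1 : (1 : ℝ) ≤ ∑ i ∈ Sᶜ, phi p (z i) := by
          have : phi p (z j) = 1 := by
            unfold phi; rw [if_neg hjne, hp0, Real.rpow_zero]
          calc (1:ℝ) = phi p (z j) := this.symm
            _ ≤ ∑ i ∈ Sᶜ, phi p (z i) :=
              Finset.single_le_sum (fun i _ => phi_nonneg p (z i)) hjc
        have h2 : ∑ i ∈ S, phi p (z i) ≤ (N : ℝ) := by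
          calc ∑ i ∈ S, phi p (z i) ≤ ∑ _i ∈ S, (1:ℝ) := by
                refine Finset.sum_le_sum fun i _ => ?_
                unfold phi; split
                · exact zero_le_one
                · rw [hp0, Real.rpow_zero]
            _ = S.card := by simp
            _ ≤ (N : ℝ) := by
                have : S.card ≤ N := by
                  simpa using Finset.card_le_univ S
                exact_mod_cast this
        calc ∑ i ∈ S, phi p (z i) ≤ (N:ℝ) := h2
          _ = (N:ℝ) * 1 := (mul_one _).symm
          _ ≤ (N:ℝ) * ∑ i ∈ Sᶜ, phi p (z i) :=
            mul_le_mul_of_nonneg_left h1 (Nat.cast_nonneg N)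
    · -- compactness argument for p ≠ 0
      have hppos : 0 < p := lt_of_le_of_ne hp.1 (Ne.symm hp0)
      set Kset : Set (Fin N → ℝ) :=
        {z | A.mulVec z = 0} ∩ Metric.sphere (0 : Fin N → ℝ) 1 with hKset
      have hclosed : IsClosed {z : Fin N → ℝ | A.mulVec z = 0} := by
        have hcont : Continuous fun z : Fin N → ℝ => A.mulVec z := by
          have := LinearMap.continuous_of_finiteDimensional A.mulVecLin
          exact this
        exact isClosed_eq hcont continuous_const
      have hKcompact : IsCompact Kset :=
        (isCompact_sphere (0 : Fin N → ℝ) 1).inter_left hclosed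
      have hKne : Kset.Nonempty := by
        obtain ⟨z₀, hz₀, hz₀ne, _⟩ := hspark.1
        have hnorm : ‖z₀‖ ≠ 0 := norm_ne_zero_iff.mpr hz₀ne
        refine ⟨‖z₀‖⁻¹ • z₀, ?_, ?_⟩
        · show A.mulVec (‖z₀‖⁻¹ • z₀) = 0
          rw [Matrix.mulVec_smul, hz₀, smul_zero]
        · rw [mem_sphere_zero_iff_norm, norm_smul, norm_inv, norm_norm,
            inv_mul_cancel₀ hnorm]
      set f : (Fin N → ℝ) → ℝ := fun z => ∑ i ∈ Sᶜ, |z i| ^ p with hf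
      have hfcont : Continuous f := by
        refine continuous_finset_sum _ fun i _ => ?_
        exact ((continuous_apply i).abs).rpow_const fun x => Or.inr hp.1
      obtain ⟨w₀, hw₀K, hmin⟩ := hKcompact.exists_isMinOn hKne hfcont.continuousOn
      by_cases hScard : S.card ≤ k
      swap
      · exact ⟨0, le_refl 0, fun z hz hS => absurd hS hScard⟩
      have hw₀ne : w₀ ≠ 0 := by
        intro h0
        have := hw₀K.2
        rw [mem_sphere_zero_iff_norm, h0, norm_zero] at this
        exact zero_ne_one this
      have hεpos : 0 < f w₀ := by
        obtain ⟨j, hjc, hjne⟩ := exists_outside hspark hk hScard hw₀K.1 hw₀ne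
        refine Finset.sum_pos' (fun i _ => Real.rpow_nonneg (abs_nonneg _) p) ⟨j, hjc, ?_⟩
        exact Real.rpow_pos_of_pos (abs_pos.2 hjne) p
      refine ⟨(N : ℝ) / f w₀, div_nonneg (Nat.cast_nonneg N) hεpos.le, ?_⟩
      intro z hz hS
      by_cases hzne : z = 0
      · simp [hzne, phi]
      · set t : ℝ := ‖z‖ with ht
        have htpos : 0 < t := norm_pos_iff.mpr hzne
        set w : Fin N → ℝ := t⁻¹ • z with hw
        have hwK : w ∈ Kset := by
          constructor
          · show A.mulVec (t⁻¹ • z) = 0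
            rw [Matrix.mulVec_smul, hz, smul_zero]
          · rw [mem_sphere_zero_iff_norm, hw, norm_smul, norm_inv, norm_norm,
              inv_mul_cancel₀ (ne_of_gt htpos)]
        have hzi : ∀ i, z i = t * w i := by
          intro i
          simp only [hw, Pi.smul_apply, smul_eq_mul]
          field_simp
        have htp : 0 < t ^ p := Real.rpow_pos_of_pos htpos p
        have hsum : ∀ T : Finset (Fin N),
            ∑ i ∈ T, phi p (z i) = t ^ p * ∑ i ∈ T, phi p (w i) := by
          intro T
          rw [Finset.mul_sum]
          refine Finset.sum_congr rfl fun i _ => ?_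
          rw [hzi i, phi_smul p t (w i) htpos]
        have hwle : ∀ i, phi p (w i) ≤ 1 := by
          intro i
          rw [phi_eq hp0]
          refine Real.rpow_le_one (abs_nonneg _) ?_ hp.1
          have := norm_le_pi_norm w i
          rw [mem_sphere_zero_iff_norm.mp hwK.2] at this
          simpa using this
        have hnum : ∑ i ∈ S, phi p (w i) ≤ (N : ℝ) := by
          calc ∑ i ∈ S, phi p (w i) ≤ ∑ _i ∈ S, (1:ℝ) :=
                Finset.sum_le_sum fun i _ => hwle i
            _ = S.card := by simp
            _ ≤ (N : ℝ) := by
                have : S.card ≤ N := by simpa using Finset.card_le_univ S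
                exact_mod_cast this
        have hden : f w₀ ≤ ∑ i ∈ Sᶜ, phi p (w i) := by
          have := hmin hwK
          have heq : f w = ∑ i ∈ Sᶜ, phi p (w i) := by
            refine Finset.sum_congr rfl fun i _ => (phi_eq hp0 (w i)).symm
          rw [← heq]; exact this
        rw [hsum S, hsum Sᶜ]
        rw [div_mul_eq_mul_div, le_div_iff₀ hεpos]
        calc t ^ p * (∑ i ∈ S, phi p (w i)) * f w₀
            ≤ t ^ p * (N:ℝ) * f w₀ := by
              have := mul_le_mul_of_nonneg_left hnum htp.le
              exact mul_le_mul_of_nonneg_right this hεpos.le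
          _ = (N:ℝ) * (t ^ p * f w₀) := by ring
          _ ≤ (N:ℝ) * (t ^ p * ∑ i ∈ Sᶜ, phi p (w i)) :=
              mul_le_mul_of_nonneg_left
                (mul_le_mul_of_nonneg_left hden htp.le) (Nat.cast_nonneg N)
  choose c hc0 hc using key
  have hune : (Finset.univ : Finset (Finset (Fin N))).Nonempty := ⟨∅, Finset.mem_univ _⟩
  refine ⟨Finset.univ.sup' hune c, ?_⟩
  intro S hS z hz
  calc ∑ i ∈ S, phi p (z i) ≤ c S * ∑ i ∈ Sᶜ, phi p (z i) := hc S z hz hS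
    _ ≤ Finset.univ.sup' hune c * ∑ i ∈ Sᶜ, phi p (z i) :=
      mul_le_mul_of_nonneg_right (Finset.le_sup' c (Finset.mem_univ S))
        (Finset.sum_nonneg fun i _ => phi_nonneg p (z i))

/-- for every p ∈ [0,1], γ(ℓ_p,A,k) is strictly increasing in k for k ≤ L. -/
theorem stmt4 {M N L : ℕ} (A : Matrix (Fin M) (Fin N) ℝ) (hspark : sparkEq A (L + 1))
    (p : ℝ) (hp : p ∈ Set.Icc (0 : ℝ) 1) (k : ℕ) (hk2 : 2 ≤ k) (hk : k ≤ L) :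
    gammaNSC A p (k - 1) < gammaNSC A p k := by
  obtain ⟨z₀, hz₀k, hz₀ne, hz₀card⟩ := hspark.1
  have hN : L + 1 ≤ N := by
    have := Finset.card_le_univ (supp z₀)
    simpa [hz₀card] using this
  have hNk : k + 1 ≤ N := by omega
  have hB : 0 < ∑ i ∈ (∅ : Finset (Fin N))ᶜ, phi p (z₀ i) := by
    have : ∃ j, z₀ j ≠ 0 := by
      by_contra h
      push_neg at h
      exact hz₀ne (funext h)
    obtain ⟨j, hj⟩ := this
    exact Finset.sum_pos' (fun i _ => phi_nonneg p (z₀ i))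
      ⟨j, by simp, phi_pos p hj⟩
  have hval_nonneg : ∀ (j : ℕ) (γ : ℝ), γ ∈ validNSC A p j → 0 ≤ γ := by
    intro j γ hγ
    have h := hγ ∅ (Nat.zero_le j) z₀ hz₀k
    rw [Finset.sum_empty] at h
    by_contra hneg
    push_neg at hneg
    have := mul_neg_of_neg_of_pos hneg hB
    linarith
  have hsub : validNSC A p k ⊆ validNSC A p (k - 1) := by
    intro γ hγ S hS z hz
    exact hγ S (hS.trans (Nat.sub_le k 1)) z hz
  have hVk : (validNSC A p k).Nonempty := valid_nonempty A hspark p hp k hk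
  have hVk1 : (validNSC A p (k - 1)).Nonempty := hVk.mono hsub
  have hbdd : BddBelow (validNSC A p (k - 1)) := ⟨0, fun γ hγ => hval_nonneg _ γ hγ⟩
  set γ' := gammaNSC A p (k - 1) with hγ'
  have hγ'0 : 0 ≤ γ' := le_csInf hVk1 fun γ hγ => hval_nonneg _ γ hγ
  have hNR : (k : ℝ) + 1 ≤ (N : ℝ) := by exact_mod_cast hNk
  have hkR : (2 : ℝ) ≤ (k : ℝ) := by exact_mod_cast hk2
  have hNpos : (0 : ℝ) < N := by linarith
  have hN1pos : (0 : ℝ) < (N : ℝ) - 1 := by linarith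
  have key : ∀ x ∈ validNSC A p k, ((N : ℝ) * γ' + 1) / ((N : ℝ) - 1) ≤ x := by
    intro x hx
    have hx0 : 0 ≤ x := hval_nonneg k x hx
    have hmem : (((N : ℝ) - 1) * x - 1) / N ∈ validNSC A p (k - 1) := by
      intro S hS z hz
      have hSc : (Sᶜ : Finset (Fin N)).Nonempty := by
        rw [← Finset.card_pos, Finset.card_compl]
        simp only [Fintype.card_fin]
        omega
      obtain ⟨j, hjmem, hjmax⟩ := Finset.exists_max_image Sᶜ (fun i => phi p (z i)) hSc
      have hjS : j ∉ S := Finset.mem_compl.mp hjmem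
      set a := ∑ i ∈ S, phi p (z i) with ha
      set b := ∑ i ∈ Sᶜ, phi p (z i) with hb
      set c := phi p (z j) with hcdef
      have hc0 : 0 ≤ c := phi_nonneg p (z j)
      have hb0 : 0 ≤ b := Finset.sum_nonneg fun i _ => phi_nonneg p (z i)
      have hbNc : b ≤ (N : ℝ) * c := by
        calc b ≤ ∑ _i ∈ Sᶜ, c := Finset.sum_le_sum hjmax
          _ = (Sᶜ.card : ℝ) * c := by rw [Finset.sum_const, nsmul_eq_mul]
          _ ≤ (N : ℝ) * c := by
              refine mul_le_mul_of_nonneg_right ?_ hc0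
              have : Sᶜ.card ≤ N := by simpa using Finset.card_le_univ Sᶜ
              exact_mod_cast this
      have hinscard : (insert j S).card ≤ k := by
        rw [Finset.card_insert_of_notMem hjS]
        omega
      have hins := hx (insert j S) hinscard z hz
      rw [Finset.sum_insert hjS, Finset.compl_insert,
        Finset.sum_erase_eq_sub hjmem] at hins
      -- hins : c + a ≤ x * (b - c)
      rw [div_mul_eq_mul_div, le_div_iff₀ hNpos]
      nlinarith [mul_le_mul_of_nonneg_right hins hNpos.le,
        mul_nonneg (by linarith : (0:ℝ) ≤ x + 1) (by linarith : (0:ℝ) ≤ (N:ℝ) * c - b)]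
    have h1 : γ' ≤ (((N : ℝ) - 1) * x - 1) / N := csInf_le hbdd hmem
    rw [le_div_iff₀ hNpos] at h1
    rw [div_le_iff₀ hN1pos]
    nlinarith
  have hfin : ((N : ℝ) * γ' + 1) / ((N : ℝ) - 1) ≤ gammaNSC A p k := le_csInf hVk key
  have hlt : γ' < ((N : ℝ) * γ' + 1) / ((N : ℝ) - 1) := by
    rw [lt_div_iff₀ hN1pos]
    nlinarith
  linarith
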